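/- In the setting of cancellation of a pair x, y with c_{xy} = 1 in an 𝔽₂ chain complex (C,d) with basis G: define f : C → C' on basis elements by f(x) = 0, f(y) = Σ_{b∈G'} c_{xb}·b, f(a) = a for a ∈ G' = G\{x,y}, and g : C' → C by g(a) = a + c_{ay}·x. Then f and g are chain maps (f ∘ d = d' ∘ f and g ∘ d' = d ∘ g), where d' has coefficients c'_{ac} = c_{ac} + c_{ay}c_{xc}. -/
import Mathlib

lemma subSum {G : Type*} [Fintype G] [DecidableEq G] (x y : G) (hxy : x ≠ y)
    (F : G → ZMod 2) :
    ∑ e : {g : G // g ≠ x ∧ g ≠ y}, F ↑e = (∑ e : G, F e) + F x + F y := by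
  have h : ∑ e ∈ Finset.univ \ {x, y}, F e
      = ∑ e : {g : G // g ≠ x ∧ g ≠ y}, F ↑e :=
    Finset.sum_subtype _ (by intro e; simp [not_or]) F
  rw [← h, Finset.sum_sdiff_eq_sub (Finset.subset_univ _), Finset.sum_pair hxy,
    CharTwo.sub_eq_add]
  ring

lemma sumNested {G : Type*} [Fintype G] [DecidableEq G] (u v : G) (huv : u ≠ v)
    (F : G → ZMod 2) (p q : ZMod 2) :
    ∑ e : G, F e * (if e = u then p else if e = v then q else 0)
      = F u * p + F v * q := by
  have h : ∀ e : G, F e * (if e = u then p else if e = v then q else 0)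
      = (if e = u then F u * p else 0) + (if e = v then F v * q else 0) := by
    intro e
    by_cases h1 : e = u <;> by_cases h2 : e = v <;> simp_all
  simp only [h, Finset.sum_add_distrib, Finset.sum_ite_eq', Finset.mem_univ, if_true]

/-- In the cancellation setup over `𝔽₂` (basis `G`, coefficients `c`, `x ≠ y`
with `c_{xy} = 1`), the maps `f : C → C'` (with `f(x) = 0`,
`f(y) = ∑_{b∈G'} c_{xb} b`, `f(a) = a` for `a ∈ G'`) and `g : C' → C`
(with `g(a) = a + c_{ay} x`) are chain maps: `f ∘ d = d' ∘ f` and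
`g ∘ d' = d ∘ g` in coefficient form, where `c'_{ac} = c_{ac} + c_{ay} c_{xc}`. -/
theorem cancellation_f_g_chain_maps {G : Type*} [Fintype G] [DecidableEq G]
    (c : G → G → ZMod 2)
    (hd2 : ∀ a b : G, ∑ e : G, c a e * c e b = 0)
    (x y : G) (hxy : x ≠ y) (hcxy : c x y = 1) :
    (∀ (a : G) (b : {g : G // g ≠ x ∧ g ≠ y}),
        ∑ e : G, c a e * (if e = y then c x ↑b else if e = ↑b then 1 else 0)
          = ∑ e : {g : G // g ≠ x ∧ g ≠ y},
              (if a = y then c x ↑e else if a = ↑e then 1 else 0)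
                * (c ↑e ↑b + c ↑e y * c x ↑b)) ∧
    (∀ (a : {g : G // g ≠ x ∧ g ≠ y}) (b : G),
        ∑ e : {g : G // g ≠ x ∧ g ≠ y},
            (c ↑a ↑e + c ↑a y * c x ↑e)
              * ((if (↑e : G) = b then 1 else 0) + (if b = x then c ↑e y else 0))
          = ∑ e : G,
              ((if (↑a : G) = e then 1 else 0) + (if e = x then c ↑a y else 0))
                * c e b) := by
  constructor
  · intro a b
    obtain ⟨b, hbx, hby⟩ := b
    rw [sumNested y b (Ne.symm hby) (c a) (c x b) 1,
      subSum x y hxy (fun e =>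
        (if a = y then c x e else if a = e then 1 else 0) * (c e b + c e y * c x b))]
    by_cases hay : a = y
    · rw [hay]
      simp only [eq_self_iff_true, if_true]
      have h1 : ∑ e : G, c x e * (c e b + c e y * c x b) = 0 := by
        have key : ∀ e : G, c x e * (c e b + c e y * c x b)
            = c x e * c e b + (c x e * c e y) * c x b := by intro e; ring
        simp only [key, Finset.sum_add_distrib, ← Finset.sum_mul, hd2, zero_mul,
          add_zero, zero_add]
      rw [h1, hcxy]
      generalize c x b = p
      generalize c y b = q
      generalize c x x = r
      generalize c y y = s
      revert p q r s
      decide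
    · simp only [if_neg hay, ite_mul, one_mul, zero_mul, Finset.sum_ite_eq,
        Finset.mem_univ, if_true]
      by_cases hax : a = x
      · rw [hax, if_pos rfl, hcxy]
        generalize c x b = p
        generalize c x y = q
        revert p q
        decide
      · rw [if_neg hax]
        ring
  · intro a b
    obtain ⟨a, hax, hay⟩ := a
    rw [subSum x y hxy (fun e =>
      (c a e + c a y * c x e) * ((if e = b then 1 else 0) + (if b = x then c e y else 0)))]
    have hRHS : ∑ e : G, ((if a = e then 1 else 0) + (if e = x then c a y else 0)) * c e b
        = c a b + c a y * c x b := by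
      simp only [add_mul, ite_mul, one_mul, zero_mul, Finset.sum_add_distrib,
        Finset.sum_ite_eq, Finset.sum_ite_eq', Finset.mem_univ, if_true]
    rw [hRHS]
    by_cases hbx : b = x
    · rw [hbx]
      simp only [eq_self_iff_true, if_true]
      have h1 : ∑ e : G, (c a e + c a y * c x e) * ((if e = x then 1 else 0) + c e y)
          = c a x + c a y * c x x := by
        have key : ∀ e : G, (c a e + c a y * c x e) * ((if e = x then 1 else 0) + c e y)
            = (if e = x then c a x + c a y * c x x else 0)
              + (c a e * c e y + (c x e * c e y) * c a y) := by
          intro e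
          by_cases h : e = x
          · subst h; simp; ring
          · simp only [if_neg h, zero_add]; ring
        simp only [key, Finset.sum_add_distrib, Finset.sum_ite_eq', Finset.mem_univ,
          if_true, ← Finset.sum_mul, hd2, zero_mul, add_zero, mul_zero]
      rw [h1, if_neg (Ne.symm hxy), hcxy]
      generalize c a x = p
      generalize c a y = q
      generalize c x x = r
      generalize c y y = s
      revert p q r s
      decide
    · simp only [if_neg hbx, add_zero]
      have h1 : ∑ e : G, (c a e + c a y * c x e) * (if e = b then 1 else 0)
          = c a b + c a y * c x b := by
        simp only [mul_ite, mul_one, mul_zero, Finset.sum_ite_eq', Finset.mem_univ,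
          if_true]
      rw [h1, hcxy, if_neg (fun h : x = b => hbx h.symm)]
      generalize (if y = b then (1:ZMod 2) else 0) = t
      generalize c a b = p
      generalize c a y = q
      generalize c x b = r
      generalize c a x = s
      generalize c x x = u
      revert t p q r s u
      decide
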